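/- Let m ≥ 3 and t ≥ 1, and let G = P_m * K_t be the join of the path P_m on m vertices and the complete graph K_t on t vertices. Then G is a strongly interval graph and c(G) = m − 1. -/

import Mathlib

/-- `c(G)`: the number of maximal cliques of a graph `G`. -/
noncomputable def numMaximalCliques {V : Type*} (G : SimpleGraph V) : ℕ :=
  {s : Set V | Maximal (fun t => G.IsClique t) s}.ncard

/-- The interval graph on a set `I` of closed real intervals, encoded as pairs
`(left endpoint, right endpoint)`: two distinct intervals are adjacent iff they intersect. -/
def intervalGraph (I : Set (ℝ × ℝ)) : SimpleGraph I where
  Adj p q := p ≠ q ∧ (Set.Icc p.val.1 p.val.2 ∩ Set.Icc q.val.1 q.val.2).Nonempty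
  symm := by
    constructor
    rintro p q ⟨h1, h2⟩
    exact ⟨h1.symm, by rwa [Set.inter_comm]⟩
  loopless := ⟨fun p h => h.1 rfl⟩

/-- The interval `J_i`: `J_0 = [0,0]` and `J_i = [i-1,i]` for `i ≥ 1`. -/
noncomputable def Jint (i : ℕ) : ℝ × ℝ := if i = 0 then (0, 0) else ((i : ℝ) - 1, (i : ℝ))

/-- The vertex set `{J_0,…,J_k} ∪ {I_1,…,I_r}` of a connected strongly interval graph, where
`I_j = [a j, b j]`. -/
def stronglyIntervalVerts (k r : ℕ) (a : Fin r → ℕ) (b : Fin r → ℝ) : Set (ℝ × ℝ) :=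
  (Jint '' {i | i ≤ k}) ∪ (Set.range fun j : Fin r => ((a j : ℝ), b j))

/-- The conditions on the data of a connected strongly interval graph: `k ≥ 1` and each
`I_j = [a j, b j]` is a genuine closed interval, with integer left endpoint `a j`, contained
in `[0,k] \ {k}`. -/
def StronglyIntervalData (k r : ℕ) (a : Fin r → ℕ) (b : Fin r → ℝ) : Prop :=
  1 ≤ k ∧ ∀ j : Fin r, (a j : ℝ) ≤ b j ∧
    Set.Icc (a j : ℝ) (b j) ⊆ Set.Icc (0 : ℝ) (k : ℝ) \ {(k : ℝ)}

/-- A graph is a strongly interval graph if every connected component of it is isomorphic to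
a connected strongly interval graph. -/
def IsStronglyIntervalGraph {V : Type*} (G : SimpleGraph V) : Prop :=
  ∀ c : G.ConnectedComponent, ∃ (k r : ℕ) (a : Fin r → ℕ) (b : Fin r → ℝ),
    StronglyIntervalData k r a b ∧
    Nonempty ((G.induce c.supp) ≃g intervalGraph (stronglyIntervalVerts k r a b))

/-- The join `G * H` of two graphs on disjoint vertex sets: all edges of `G` and of `H`,
together with all pairs consisting of a vertex of `G` and a vertex of `H`. -/
def joinGraph {α β : Type*} (G : SimpleGraph α) (H : SimpleGraph β) :
    SimpleGraph (α ⊕ β) where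
  Adj u w :=
    match u, w with
    | Sum.inl a, Sum.inl a' => G.Adj a a'
    | Sum.inr b, Sum.inr b' => H.Adj b b'
    | Sum.inl _, Sum.inr _ => True
    | Sum.inr _, Sum.inl _ => True
  symm := by
    constructor
    rintro (a | b) (a' | b') h
    · exact G.adj_symm h
    · trivial
    · trivial
    · exact H.adj_symm h
  loopless := by
    constructor
    rintro (a | b) h
    · exact G.irrefl h
    · exact H.irrefl h

section JPCAux
lemma Jint_snd (i : ℕ) : (Jint i).2 = i := by
  unfold Jint; split
  · simp [*]
  · rfl
lemma Jint_fst (i : ℕ) (hi : i ≠ 0) : (Jint i).1 = (i : ℝ) - 1 := by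
  simp [Jint, hi]
lemma Jint_inj : Function.Injective Jint := by
  intro i j h
  have : ((i : ℕ) : ℝ) = j := by rw [← Jint_snd i, ← Jint_snd j, h]
  exact_mod_cast this
noncomputable def bfun (k : ℕ) {t : ℕ} (j : Fin t) : ℝ := (k : ℝ) - 1 / (j.val + 2)
lemma bfun_lt (k : ℕ) {t : ℕ} (j : Fin t) : bfun k j < k := by
  have : (0:ℝ) < 1 / (j.val + 2) := by positivity
  unfold bfun; linarith
lemma lt_bfun (k : ℕ) {t : ℕ} (j : Fin t) : (k : ℝ) - 1 < bfun k j := by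
  have h0 : (0:ℝ) ≤ (j.val : ℝ) := by positivity
  have : (1:ℝ) / (j.val + 2) < 1 := by
    rw [div_lt_one (by positivity)]; linarith
  unfold bfun; linarith
lemma nat_ne_bfun (k n : ℕ) {t : ℕ} (j : Fin t) : (n : ℝ) ≠ bfun k j := by
  intro h
  have h1 := lt_bfun k j
  have h2 := bfun_lt k j
  rw [← h] at h1 h2
  have hn : n < k := by exact_mod_cast h2
  have hk : (k : ℝ) < n + 1 := by linarith
  have : k < n + 1 := by exact_mod_cast hk
  omega
lemma bfun_inj (k : ℕ) {t : ℕ} : Function.Injective (bfun k (t := t)) := by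
  intro j j' h
  have h2 : (1:ℝ) / (j.val + 2) = 1 / (j'.val + 2) := by
    unfold bfun at h; linarith
  rw [one_div, one_div] at h2
  have h3 : ((j.val : ℝ) + 2) = ((j'.val : ℝ) + 2) := inv_inj.mp h2
  have : (j.val : ℝ) = j'.val := by linarith
  exact Fin.ext (by exact_mod_cast this)
lemma key_JJ (n n' : ℕ) : (Jint n).1 ≤ (Jint n').2 ↔ n ≤ n' + 1 := by
  rcases Nat.eq_zero_or_pos n with h | h
  · subst h
    simp only [Jint_snd]
    constructor
    · intro _; omega
    · intro _
      show (Jint 0).1 ≤ _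
      simp only [Jint, if_pos rfl]
      positivity
  · rw [Jint_fst n (by omega), Jint_snd, sub_le_iff_le_add]
    constructor
    · intro hh; exact_mod_cast hh
    · intro hh; exact_mod_cast hh
lemma inter_JJ (i i' : ℕ) :
    (Set.Icc (Jint i).1 (Jint i).2 ∩ Set.Icc (Jint i').1 (Jint i').2).Nonempty
      ↔ (i = i' ∨ i + 1 = i' ∨ i' + 1 = i) := by
  rw [Set.Icc_inter_Icc, Set.nonempty_Icc, le_min_iff, max_le_iff, max_le_iff]
  have h1 := key_JJ i i'
  have h2 := key_JJ i' i
  have hii := (key_JJ i i).mpr (by omega)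
  have hii' := (key_JJ i' i').mpr (by omega)
  constructor
  · rintro ⟨⟨_, hb⟩, hc, _⟩
    have := h2.mp hb
    have := h1.mp hc
    omega
  · intro h
    exact ⟨⟨hii, h2.mpr (by omega)⟩, h1.mpr (by omega), hii'⟩

abbrev JPCG (m t : ℕ) : SimpleGraph (Fin m ⊕ Fin t) :=
  joinGraph (SimpleGraph.pathGraph m) (⊤ : SimpleGraph (Fin t))

def cliqueC (m t i : ℕ) : Set (Fin m ⊕ Fin t) :=
  (Sum.inl '' {u : Fin m | u.val = i ∨ u.val = i + 1}) ∪ Set.range Sum.inr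

lemma mem_cliqueC_inl {m t i : ℕ} {u : Fin m} :
    Sum.inl u ∈ cliqueC m t i ↔ u.val = i ∨ u.val = i + 1 := by
  simp [cliqueC]

lemma mem_cliqueC_inr {m t i : ℕ} (j : Fin t) : Sum.inr j ∈ cliqueC m t i := by
  simp [cliqueC]

lemma cliqueC_isClique {m t i : ℕ} (hi : i + 1 < m) :
    (JPCG m t).IsClique (cliqueC m t i) := by
  rintro x hx y hy hxy
  rcases x with u | j <;> rcases y with v | j'
  · rw [mem_cliqueC_inl] at hx hy
    have huv : u.val ≠ v.val := fun h => hxy (by rw [Fin.ext h])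
    show (SimpleGraph.pathGraph m).Adj u v
    rw [SimpleGraph.pathGraph_adj]
    omega
  · trivial
  · trivial
  · show j ≠ j'
    exact fun h => hxy (by rw [h])

lemma clique_subset_cliqueC {m t : ℕ} (hm : 3 ≤ m) {s : Set (Fin m ⊕ Fin t)}
    (hs : (JPCG m t).IsClique s) :
    ∃ i, i + 1 < m ∧ s ⊆ cliqueC m t i := by
  have hadj : ∀ u v : Fin m, Sum.inl u ∈ s → Sum.inl v ∈ s → u.val ≠ v.val →
      (u.val + 1 = v.val ∨ v.val + 1 = u.val) := by
    intro u v hu hv hne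
    have h := hs hu hv (fun h => hne (by injection h with h; rw [h]))
    exact SimpleGraph.pathGraph_adj.mp h
  by_cases h2 : ∃ u v : Fin m, Sum.inl u ∈ s ∧ Sum.inl v ∈ s ∧ u.val + 1 = v.val
  · obtain ⟨u, v, hu, hv, huv⟩ := h2
    refine ⟨u.val, by omega, ?_⟩
    rintro (w | j) hw
    · rw [mem_cliqueC_inl]
      rcases eq_or_ne w.val u.val with h | h
      · left; exact h
      · rcases eq_or_ne w.val v.val with h' | h'
        · right; omega
        · have a1 := hadj w u hw hu h
          have a2 := hadj w v hw hv h'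
          omega
    · exact mem_cliqueC_inr j
  · push_neg at h2
    by_cases h1 : ∃ u : Fin m, Sum.inl u ∈ s
    · obtain ⟨u, hu⟩ := h1
      have honly : ∀ w : Fin m, Sum.inl w ∈ s → w.val = u.val := by
        intro w hw
        by_contra hne
        rcases hadj w u hw hu hne with h | h
        · exact absurd h (h2 w u hw hu)
        · exact absurd h (h2 u w hu hw)
      by_cases hcase : u.val + 1 < m
      · refine ⟨u.val, hcase, ?_⟩
        rintro (w | j) hw
        · rw [mem_cliqueC_inl]; left; exact honly w hw
        · exact mem_cliqueC_inr j
      · refine ⟨u.val - 1, by omega, ?_⟩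
        rintro (w | j) hw
        · rw [mem_cliqueC_inl]
          right
          have := honly w hw
          have := u.isLt
          omega
        · exact mem_cliqueC_inr j
    · push_neg at h1
      refine ⟨0, by omega, ?_⟩
      rintro (w | j) hw
      · exact absurd hw (h1 w)
      · exact mem_cliqueC_inr j

lemma maximalCliques_eq {m t : ℕ} (hm : 3 ≤ m) :
    {s : Set (Fin m ⊕ Fin t) | Maximal (fun r => (JPCG m t).IsClique r) s}
      = cliqueC m t '' {i | i + 1 < m} := by
  ext s
  simp only [Set.mem_setOf_eq, Set.mem_image]
  constructor
  · rintro ⟨hclique, hmax⟩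
    obtain ⟨i, hi, hsub⟩ := clique_subset_cliqueC hm hclique
    refine ⟨i, hi, ?_⟩
    exact (hmax (cliqueC_isClique hi) hsub).antisymm hsub
  · rintro ⟨i, hi, rfl⟩
    refine ⟨cliqueC_isClique hi, ?_⟩
    intro r hr hCr
    obtain ⟨i', hi', hsub⟩ := clique_subset_cliqueC hm hr
    have h1 : Sum.inl (⟨i, by omega⟩ : Fin m) ∈ cliqueC m t i' :=
      hsub (hCr (by rw [mem_cliqueC_inl]; left; rfl))
    have h2 : Sum.inl (⟨i + 1, hi⟩ : Fin m) ∈ cliqueC m t i' :=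
      hsub (hCr (by rw [mem_cliqueC_inl]; right; rfl))
    rw [mem_cliqueC_inl] at h1 h2
    simp only [] at h1 h2
    have : i' = i := by omega
    rwa [this] at hsub

lemma cliqueC_injOn {m t : ℕ} : Set.InjOn (cliqueC m t) {i | i + 1 < m} := by
  intro i hi i' hi' h
  simp only [Set.mem_setOf_eq] at hi hi'
  have h1 : Sum.inl (⟨i, by omega⟩ : Fin m) ∈ cliqueC m t i' := by
    rw [← h, mem_cliqueC_inl]; left; rfl
  have h2 : Sum.inl (⟨i', by omega⟩ : Fin m) ∈ cliqueC m t i := by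
    rw [h, mem_cliqueC_inl]; left; rfl
  rw [mem_cliqueC_inl] at h1 h2
  simp only [] at h1 h2
  omega

lemma count_maximalCliques {m t : ℕ} (hm : 3 ≤ m) :
    {s : Set (Fin m ⊕ Fin t) | Maximal (fun r => (JPCG m t).IsClique r) s}.ncard = m - 1 := by
  rw [maximalCliques_eq hm, Set.ncard_image_of_injOn cliqueC_injOn]
  have : {i : ℕ | i + 1 < m} = ↑(Finset.range (m - 1)) := by
    ext i; simp; omega
  rw [this, Set.ncard_coe_finset, Finset.card_range]


lemma zero_le_bfun {k : ℕ} (hk : 2 ≤ k) {t : ℕ} (j : Fin t) : (0:ℝ) ≤ bfun k j := by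
  have h1 := lt_bfun k j
  have : (2:ℝ) ≤ k := by exact_mod_cast hk
  linarith

lemma inter_JI {k : ℕ} (hk : 2 ≤ k) {t : ℕ} (i : ℕ) (hi : i ≤ k) (j : Fin t) :
    (Set.Icc (Jint i).1 (Jint i).2 ∩ Set.Icc (0:ℝ) (bfun k j)).Nonempty := by
  have hb := lt_bfun k j
  rcases Nat.eq_zero_or_pos i with h | h
  · subst h
    refine ⟨0, ?_, ?_⟩
    · simp [Jint]
    · exact ⟨le_refl _, zero_le_bfun hk j⟩
  · refine ⟨(i:ℝ) - 1, ?_, ?_⟩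
    · rw [Set.mem_Icc, Jint_fst i (by omega), Jint_snd]
      constructor
      · exact le_refl _
      · linarith
    · rw [Set.mem_Icc]
      have h1 : (1:ℝ) ≤ i := by exact_mod_cast h
      have h2 : (i:ℝ) ≤ k := by exact_mod_cast hi
      exact ⟨by linarith, by linarith⟩

noncomputable def fJPC (m t : ℕ) : Fin m ⊕ Fin t → ℝ × ℝ :=
  Sum.elim (fun i => Jint i.val) (fun j => ((0:ℝ), bfun (m - 1) j))

lemma fJPC_inj {m t : ℕ} (hm : 3 ≤ m) : Function.Injective (fJPC m t) := by
  have hne : ∀ (i : ℕ) (j : Fin t), Jint i ≠ ((0:ℝ), bfun (m-1) j) := by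
    intro i j h
    have := congrArg Prod.snd h
    rw [Jint_snd] at this
    exact nat_ne_bfun (m-1) i j this
  rintro (u | j) (v | j') h
  · simp only [fJPC, Sum.elim_inl] at h
    exact congrArg Sum.inl (Fin.ext (Jint_inj h))
  · exact absurd h (hne u.val j')
  · exact absurd h.symm (hne v.val j)
  · simp only [fJPC, Sum.elim_inr, Prod.mk.injEq] at h
    exact congrArg Sum.inr (bfun_inj (m-1) h.2)

lemma fJPC_mem {m t : ℕ} (hm : 3 ≤ m) (x : Fin m ⊕ Fin t) :
    fJPC m t x ∈ stronglyIntervalVerts (m-1) t (fun _ => 0) (bfun (m-1)) := by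
  rcases x with u | j
  · refine Or.inl ⟨u.val, ?_, rfl⟩
    have := u.isLt
    show u.val ≤ m - 1
    omega
  · refine Or.inr ⟨j, ?_⟩
    simp [fJPC]

lemma fJPC_surj {m t : ℕ} (hm : 3 ≤ m) (p : ℝ × ℝ)
    (hp : p ∈ stronglyIntervalVerts (m-1) t (fun _ => 0) (bfun (m-1))) :
    ∃ x, fJPC m t x = p := by
  rcases hp with ⟨i, hi, rfl⟩ | ⟨j, rfl⟩
  · have hi' : i ≤ m - 1 := hi
    exact ⟨Sum.inl ⟨i, by omega⟩, rfl⟩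
  · exact ⟨Sum.inr j, by simp [fJPC]⟩

lemma fJPC_adj {m t : ℕ} (hm : 3 ≤ m) (x y : Fin m ⊕ Fin t) :
    ((fJPC m t x ≠ fJPC m t y) ∧
      (Set.Icc (fJPC m t x).1 (fJPC m t x).2 ∩
        Set.Icc (fJPC m t y).1 (fJPC m t y).2).Nonempty)
      ↔ (joinGraph (SimpleGraph.pathGraph m) (⊤ : SimpleGraph (Fin t))).Adj x y := by
  have hk : 2 ≤ m - 1 := by omega
  have hne_iff : fJPC m t x ≠ fJPC m t y ↔ x ≠ y := (fJPC_inj hm).ne_iff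
  rcases x with u | j <;> rcases y with v | j'
  · simp only [fJPC, Sum.elim_inl]
    rw [inter_JJ]
    show _ ↔ (SimpleGraph.pathGraph m).Adj u v
    rw [SimpleGraph.pathGraph_adj]
    constructor
    · rintro ⟨hne, h⟩
      have : u.val ≠ v.val := fun hh => hne (by rw [hh])
      omega
    · rintro h
      refine ⟨?_, by omega⟩
      intro hh
      have := Jint_inj hh
      omega
  · constructor
    · intro _; trivial
    · intro _
      constructor
      · exact hne_iff.mpr (by simp)
      · simp only [fJPC, Sum.elim_inl, Sum.elim_inr]
        exact inter_JI hk u.val (by omega) j'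
  · constructor
    · intro _; trivial
    · intro _
      constructor
      · exact hne_iff.mpr (by simp)
      · simp only [fJPC, Sum.elim_inl, Sum.elim_inr]
        rw [Set.inter_comm]
        exact inter_JI hk v.val (by omega) j
  · simp only [fJPC, Sum.elim_inr]
    show _ ↔ j ≠ j'
    constructor
    · rintro ⟨hne, _⟩
      intro hh; exact hne (by rw [hh])
    · intro hne
      refine ⟨?_, ⟨0, ?_, ?_⟩⟩
      · intro hh
        exact hne (bfun_inj (m-1) (Prod.ext_iff.mp hh).2)
      · exact ⟨le_refl _, zero_le_bfun hk j⟩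
      · exact ⟨le_refl _, zero_le_bfun hk j'⟩

noncomputable def isoJPC {m t : ℕ} (hm : 3 ≤ m) :
    (joinGraph (SimpleGraph.pathGraph m) (⊤ : SimpleGraph (Fin t))) ≃g
      intervalGraph (stronglyIntervalVerts (m-1) t (fun _ => 0) (bfun (m-1))) where
  toEquiv := Equiv.ofBijective (fun x => ⟨fJPC m t x, fJPC_mem hm x⟩)
    ⟨fun x y h => fJPC_inj hm (congrArg Subtype.val h),
     fun p => by obtain ⟨x, hx⟩ := fJPC_surj hm p.val p.property; exact ⟨x, Subtype.ext hx⟩⟩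
  map_rel_iff' := by
    intro x y
    simp only [intervalGraph, Equiv.ofBijective_apply, Ne, Subtype.mk.injEq]
    exact Iff.trans (and_congr Subtype.ext_iff.not Iff.rfl) (fJPC_adj hm x y)


lemma jpc_preconnected {m t : ℕ} (ht : 1 ≤ t) :
    (joinGraph (SimpleGraph.pathGraph m) (⊤ : SimpleGraph (Fin t))).Preconnected := by
  have hreach : ∀ v, (joinGraph (SimpleGraph.pathGraph m)
      (⊤ : SimpleGraph (Fin t))).Reachable v (Sum.inr ⟨0, ht⟩) := by
    rintro (u | j)
    · exact SimpleGraph.Adj.reachable trivial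
    · by_cases h : j = ⟨0, ht⟩
      · rw [h]
      · exact SimpleGraph.Adj.reachable (show j ≠ ⟨0, ht⟩ from h)
  intro u v
  exact (hreach u).trans (hreach v).symm

lemma supp_eq_univ {m t : ℕ} (ht : 1 ≤ t)
    (c : (joinGraph (SimpleGraph.pathGraph m) (⊤ : SimpleGraph (Fin t))).ConnectedComponent) :
    c.supp = Set.univ := by
  obtain ⟨w, rfl⟩ := c.exists_rep
  ext v
  simp only [SimpleGraph.ConnectedComponent.mem_supp_iff, Set.mem_univ, iff_true]
  exact SimpleGraph.ConnectedComponent.sound (jpc_preconnected ht v w)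

end JPCAux

/-- Let `m ≥ 3` and `t ≥ 1`, and let `G = P_m * K_t` be the join of the path `P_m` on `m`
vertices and the complete graph `K_t` on `t` vertices.  Then `G` is a strongly interval
graph and `c(G) = m - 1`. -/
theorem join_path_complete_stronglyInterval (m t : ℕ) (hm : 3 ≤ m) (ht : 1 ≤ t) :
    IsStronglyIntervalGraph
        (joinGraph (SimpleGraph.pathGraph m) (⊤ : SimpleGraph (Fin t))) ∧
      numMaximalCliques (joinGraph (SimpleGraph.pathGraph m) (⊤ : SimpleGraph (Fin t))) =
        m - 1 := by
  constructor
  · intro c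
    refine ⟨m - 1, t, fun _ => 0, bfun (m - 1), ⟨by omega, fun j => ?_⟩, ?_⟩
    · have hk : 2 ≤ m - 1 := by omega
      have hb1 := zero_le_bfun hk j
      have hb2 := bfun_lt (m - 1) j
      refine ⟨by simpa using hb1, ?_⟩
      intro x hx
      rw [Set.mem_Icc] at hx
      simp only [Nat.cast_zero] at hx
      refine ⟨⟨hx.1, by linarith [hx.2]⟩, ?_⟩
      intro hxe
      rw [Set.mem_singleton_iff] at hxe
      subst hxe
      linarith [hx.2]
    · have hsupp : c.supp = Set.univ := supp_eq_univ ht c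
      rw [hsupp]
      exact ⟨((joinGraph (SimpleGraph.pathGraph m)
        (⊤ : SimpleGraph (Fin t))).induceUnivIso).trans (isoJPC hm)⟩
  · exact count_maximalCliques hm
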